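/- arXiv:2105.12891 — 6 statements merged into one kernel-verified Lean document; each statement's English description precedes it below -/
import Mathlib

section
/- For all real numbers a, b, c, the quantity D = Λ(a+c)(1−Λ(b+c)) + (1−Λ(a+c))Λ(b+c) is strictly positive and Λ(a+c)(1−Λ(b+c))/D = Λ(a−b); in particular this ratio does not depend on c. (This is the key sufficiency computation behind the conditional-logit identification of β₀ in Lemma 1.) -/
/-- The standard logistic CDF `Λ(u) = exp u / (1 + exp u)`. -/
noncomputable def logisticCDF (u : ℝ) : ℝ := Real.exp u / (1 + Real.exp u)

lemma logisticCDF_pos (u : ℝ) : 0 < logisticCDF u := by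
  unfold logisticCDF
  positivity

lemma logisticCDF_lt_one (u : ℝ) : logisticCDF u < 1 := by
  unfold logisticCDF
  rw [div_lt_one (by positivity)]
  linarith [Real.exp_pos u]

/-- For all real `a`, `b`, `c`, the quantity
`D = Λ(a+c)(1−Λ(b+c)) + (1−Λ(a+c))Λ(b+c)` is strictly positive and
`Λ(a+c)(1−Λ(b+c))/D = Λ(a−b)`; in particular this ratio does not depend on `c`. -/
theorem stmt_0 (a b c : ℝ) :
    0 < logisticCDF (a + c) * (1 - logisticCDF (b + c)) +
        (1 - logisticCDF (a + c)) * logisticCDF (b + c) ∧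
    logisticCDF (a + c) * (1 - logisticCDF (b + c)) /
        (logisticCDF (a + c) * (1 - logisticCDF (b + c)) +
          (1 - logisticCDF (a + c)) * logisticCDF (b + c)) =
      logisticCDF (a - b) := by
  have hpos : 0 < logisticCDF (a + c) * (1 - logisticCDF (b + c)) +
      (1 - logisticCDF (a + c)) * logisticCDF (b + c) := by
    have h1 := logisticCDF_pos (a + c)
    have h2 := logisticCDF_pos (b + c)
    have h3 := logisticCDF_lt_one (a + c)
    have h4 := logisticCDF_lt_one (b + c)
    nlinarith
  refine ⟨hpos, ?_⟩
  unfold logisticCDF at *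
  have e1 := Real.exp_pos (a + c)
  have e2 := Real.exp_pos (b + c)
  have e3 := Real.exp_pos (a - b)
  rw [div_eq_div_iff hpos.ne' (by positivity)]
  have hab : Real.exp (a + c) = Real.exp (a - b) * Real.exp (b + c) := by
    rw [← Real.exp_add]; ring_nf
  field_simp
  rw [hab]
  ring
end

section
/- For every n with 0 ≤ n ≤ T and every y ∈ D_n, L(y) · ∑_{d∈D_n} exp(∑_{t=1}^T d_t a_t) = exp(∑_{t=1}^T y_t a_t) · ∑_{d∈D_n} L(d). Equivalently, the conditional probability of the outcome sequence y given that the outcomes sum to n equals exp(∑_t y_t a_t)/∑_{d∈D_n} exp(∑_t d_t a_t), and is free of the heterogeneity distribution μ (the Rasch/conditional-logit sufficiency fact underlying the conditional maximum likelihood estimator). -/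
open MeasureTheory Finset

/-- `L(y) = ∫ ∏_{t} Λ(a_t+c)^{y_t} (1−Λ(a_t+c))^{1−y_t} dμ(c)` for a binary outcome
sequence `y ∈ {0,1}^T`, encoded by `y : Fin T → Bool`. -/
noncomputable def rlikelihood {T : ℕ} (a : Fin T → ℝ) (μ : Measure ℝ)
    (y : Fin T → Bool) : ℝ :=
  ∫ c, ∏ t, (if y t then logisticCDF (a t + c) else 1 - logisticCDF (a t + c)) ∂μ

/-- `D_n = {d ∈ {0,1}^T : ∑_t d_t = n}`. -/
def sumFiber (T n : ℕ) : Finset (Fin T → Bool) :=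
  Finset.univ.filter fun d => (∑ t, if d t then 1 else 0) = n

lemma key {T n : ℕ} (a : Fin T → ℝ) (μ : Measure ℝ) (d : Fin T → Bool)
    (hd : d ∈ sumFiber T n) :
    rlikelihood a μ d = Real.exp (∑ t, (if d t then (1:ℝ) else 0) * a t) *
      ∫ c, Real.exp (n * c) / ∏ t, (1 + Real.exp (a t + c)) ∂μ := by
  have hd' : (∑ t, if d t then (1:ℕ) else 0) = n := by
    simpa [sumFiber] using hd
  rw [rlikelihood, ← integral_const_mul]
  refine integral_congr_ae (Filter.Eventually.of_forall fun c => ?_)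
  have hpos : ∀ u : ℝ, (0:ℝ) < 1 + Real.exp u := fun u => by positivity
  have step1 : ∀ t, (if d t then logisticCDF (a t + c) else 1 - logisticCDF (a t + c))
      = (if d t then Real.exp (a t + c) else 1) / (1 + Real.exp (a t + c)) := by
    intro t
    by_cases h : d t <;> simp [h, logisticCDF] <;> field_simp <;> ring
  calc ∏ t, (if d t then logisticCDF (a t + c) else 1 - logisticCDF (a t + c))
      = ∏ t, (if d t then Real.exp (a t + c) else 1) / (1 + Real.exp (a t + c)) := by
        exact Finset.prod_congr rfl fun t _ => step1 t
    _ = (∏ t, (if d t then Real.exp (a t + c) else 1)) / ∏ t, (1 + Real.exp (a t + c)) :=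
        Finset.prod_div_distrib _ _
    _ = Real.exp (∑ t, (if d t then (1:ℝ) else 0) * (a t + c)) / ∏ t, (1 + Real.exp (a t + c)) := by
        congr 1
        rw [Real.exp_sum]
        exact Finset.prod_congr rfl fun t _ => by by_cases h : d t <;> simp [h]
    _ = Real.exp (∑ t, (if d t then (1:ℝ) else 0) * a t) *
          (Real.exp (n * c) / ∏ t, (1 + Real.exp (a t + c))) := by
        have hsum : (∑ t, if d t then (1:ℝ) else 0) = (n:ℝ) := by
          rw [← hd']; push_cast; exact Finset.sum_congr rfl fun t _ => by by_cases h : d t <;> simp [h]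
        have : (∑ t, (if d t then (1:ℝ) else 0) * (a t + c))
            = (∑ t, (if d t then (1:ℝ) else 0) * a t) + n * c := by
          rw [← hsum, Finset.sum_mul, ← Finset.sum_add_distrib]
          exact Finset.sum_congr rfl fun t _ => by ring
        rw [this, Real.exp_add]; ring

/-- Rasch/conditional-logit sufficiency: for every `n` with `0 ≤ n ≤ T` and every `y ∈ D_n`,
`L(y) ⬝ ∑_{d ∈ D_n} exp(∑_t d_t a_t) = exp(∑_t y_t a_t) ⬝ ∑_{d ∈ D_n} L(d)`;
equivalently, the conditional probability of the outcome sequence `y` given that the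
outcomes sum to `n` equals `exp(∑_t y_t a_t)/∑_{d ∈ D_n} exp(∑_t d_t a_t)` and is
free of the heterogeneity distribution `μ`. -/
theorem stmt_2 {T : ℕ} (hT : 1 ≤ T) (a : Fin T → ℝ) (μ : Measure ℝ)
    [IsProbabilityMeasure μ] (n : ℕ) (hn : n ≤ T) (y : Fin T → Bool)
    (hy : y ∈ sumFiber T n) :
    rlikelihood a μ y *
        ∑ d ∈ sumFiber T n, Real.exp (∑ t, (if d t then (1 : ℝ) else 0) * a t) =
      Real.exp (∑ t, (if y t then (1 : ℝ) else 0) * a t) *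
        ∑ d ∈ sumFiber T n, rlikelihood a μ d := by
  set J := ∫ c, Real.exp (n * c) / ∏ t, (1 + Real.exp (a t + c)) ∂μ with hJ
  have hsum : ∑ d ∈ sumFiber T n, rlikelihood a μ d =
      (∑ d ∈ sumFiber T n, Real.exp (∑ t, (if d t then (1:ℝ) else 0) * a t)) * J := by
    rw [Finset.sum_mul]
    exact Finset.sum_congr rfl fun d hd => key a μ d hd
  rw [hsum, key a μ y hy]
  ring
end

section
/- Let (Ω,𝓕,P,β,X,C,U₁,U₂) and (Ω',𝓕',P',β',X',C',U₁',U₂') be two two-period binary-response panel structures with logistic errors, with outcomes Y = (Y₁,Y₂) and Y' = (Y₁',Y₂'). Assume the topological support of the law of X₁ − X₂ under P is not contained in any proper linear subspace of ℝ^d (equivalently, its ℝ-linear span is all of ℝ^d). If the joint law of (Y₁,Y₂,X₁,X₂) under P equals the joint law of (Y₁',Y₂',X₁',X₂') under P', then β = β'. (Lemma 1, logit case: point identification of β₀.) -/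
open MeasureTheory ProbabilityTheory Matrix

/-- The topological support of a Borel measure: the set of points all of whose open
neighborhoods have positive measure. -/
def msupport {E : Type*} [TopologicalSpace E] [MeasurableSpace E] (μ : Measure E) : Set E :=
  {x | ∀ s : Set E, IsOpen s → x ∈ s → 0 < μ s}


namespace PanelLogit

lemma one_add_exp_pos (u : ℝ) : 0 < 1 + Real.exp u := by positivity

lemma logisticCDF_pos (u : ℝ) : 0 < logisticCDF u := by
  unfold logisticCDF; positivity

lemma logisticCDF_lt_one (u : ℝ) : logisticCDF u < 1 := by
  unfold logisticCDF
  rw [div_lt_one (one_add_exp_pos u)]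
  linarith

lemma key_identity (a b : ℝ) :
    logisticCDF a * (1 - logisticCDF b)
      = Real.exp (a - b) * ((1 - logisticCDF a) * logisticCDF b) := by
  unfold logisticCDF
  rw [Real.exp_sub]
  have ha := one_add_exp_pos a
  have hb := one_add_exp_pos b
  have hb' := Real.exp_pos b
  field_simp
  ring

lemma measurable_dot {d : ℕ} (β : Fin d → ℝ) :
    Measurable fun x : Fin d → ℝ => x ⬝ᵥ β := by
  unfold dotProduct
  exact Finset.measurable_sum _ fun i _ => (measurable_pi_apply i).mul_const _

lemma continuous_dot {d : ℕ} (β : Fin d → ℝ) :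
    Continuous fun x : Fin d → ℝ => x ⬝ᵥ β := by
  unfold dotProduct
  exact continuous_finset_sum _ fun i _ => (continuous_apply i).mul continuous_const

variable {d : ℕ}

/-- type of the "exogenous" variables -/
abbrev E (d : ℕ) := ((Fin d → ℝ) × (Fin d → ℝ)) × ℝ

noncomputable def gOne (b : Fin d → ℝ) (w : E d) : ENNReal :=
  ENNReal.ofReal (logisticCDF (w.1.1 ⬝ᵥ b + w.2)) *
    ENNReal.ofReal (1 - logisticCDF (w.1.2 ⬝ᵥ b + w.2))

noncomputable def gTwo (b : Fin d → ℝ) (w : E d) : ENNReal :=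
  ENNReal.ofReal (1 - logisticCDF (w.1.1 ⬝ᵥ b + w.2)) *
    ENNReal.ofReal (logisticCDF (w.1.2 ⬝ᵥ b + w.2))

def hmap (w : E d) : Fin d → ℝ := w.1.1 - w.1.2

noncomputable def phi (b : Fin d → ℝ) (z : Fin d → ℝ) : ENNReal :=
  ENNReal.ofReal (Real.exp (z ⬝ᵥ b))

lemma measurable_psi₁ (b : Fin d → ℝ) : Measurable fun w : E d => w.1.1 ⬝ᵥ b + w.2 :=
  ((measurable_dot b).comp measurable_fst.fst).add measurable_snd

lemma measurable_psi₂ (b : Fin d → ℝ) : Measurable fun w : E d => w.1.2 ⬝ᵥ b + w.2 :=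
  ((measurable_dot b).comp measurable_fst.snd).add measurable_snd

lemma measurable_logisticCDF : Measurable logisticCDF := by
  unfold logisticCDF
  exact (Real.measurable_exp).div ((measurable_const.add Real.measurable_exp))

lemma measurable_gOne (b : Fin d → ℝ) : Measurable (gOne b) := by
  unfold gOne
  exact (ENNReal.measurable_ofReal.comp
      (measurable_logisticCDF.comp (measurable_psi₁ b))).mul
    (ENNReal.measurable_ofReal.comp
      ((measurable_const.sub measurable_logisticCDF).comp (measurable_psi₂ b)))

lemma measurable_gTwo (b : Fin d → ℝ) : Measurable (gTwo b) := by
  unfold gTwo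
  exact (ENNReal.measurable_ofReal.comp
      ((measurable_const.sub measurable_logisticCDF).comp (measurable_psi₁ b))).mul
    (ENNReal.measurable_ofReal.comp
      (measurable_logisticCDF.comp (measurable_psi₂ b)))

lemma measurable_hmap : Measurable (hmap (d := d)) :=
  measurable_fst.fst.sub measurable_fst.snd

lemma measurable_phi (b : Fin d → ℝ) : Measurable (phi b) :=
  ENNReal.measurable_ofReal.comp (Real.measurable_exp.comp (measurable_dot b))

lemma gOne_le_one (b : Fin d → ℝ) (w : E d) : gOne b w ≤ 1 := by
  unfold gOne
  calc ENNReal.ofReal (logisticCDF (w.1.1 ⬝ᵥ b + w.2)) *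
        ENNReal.ofReal (1 - logisticCDF (w.1.2 ⬝ᵥ b + w.2)) ≤ 1 * 1 := by
        gcongr
        · exact ENNReal.ofReal_le_one.mpr (logisticCDF_lt_one _).le
        · exact ENNReal.ofReal_le_one.mpr (by linarith [logisticCDF_pos (w.1.2 ⬝ᵥ b + w.2)])
    _ = 1 := one_mul 1

lemma gTwo_ne_zero (b : Fin d → ℝ) (w : E d) : gTwo b w ≠ 0 := by
  unfold gTwo
  exact mul_ne_zero
    (ENNReal.ofReal_pos.mpr (by linarith [logisticCDF_lt_one (w.1.1 ⬝ᵥ b + w.2)])).ne'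
    (ENNReal.ofReal_pos.mpr (logisticCDF_pos _)).ne'

lemma gOne_eq (b : Fin d → ℝ) (w : E d) : gOne b w = gTwo b w * phi b (hmap w) := by
  unfold gOne gTwo phi hmap
  have h₁ := logisticCDF_pos (w.1.1 ⬝ᵥ b + w.2)
  have h₂ := logisticCDF_lt_one (w.1.1 ⬝ᵥ b + w.2)
  have h₃ := logisticCDF_pos (w.1.2 ⬝ᵥ b + w.2)
  rw [← ENNReal.ofReal_mul h₁.le,
      ← ENNReal.ofReal_mul (by linarith : (0:ℝ) ≤ 1 - logisticCDF (w.1.1 ⬝ᵥ b + w.2)),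
      ← ENNReal.ofReal_mul (mul_nonneg (by linarith) h₃.le)]
  congr 1
  have hexp : (w.1.1 ⬝ᵥ b + w.2) - (w.1.2 ⬝ᵥ b + w.2) = (w.1.1 - w.1.2) ⬝ᵥ b := by
    rw [sub_dotProduct]; ring
  rw [key_identity (w.1.1 ⬝ᵥ b + w.2) (w.1.2 ⬝ᵥ b + w.2), hexp]
  ring

section Key

variable {Ω : Type*} [MeasurableSpace Ω]

/-- Generic Fubini computation for the probability of a joint event. -/
lemma panel_key (P : Measure Ω) [IsProbabilityMeasure P]
    (X₁ X₂ : Ω → Fin d → ℝ) (C : Ω → ℝ) (U₁ U₂ : Ω → ℝ)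
    (hX₁ : Measurable X₁) (hX₂ : Measurable X₂) (hC : Measurable C)
    (hU₁ : Measurable U₁) (hU₂ : Measurable U₂)
    (hind : IndepFun (fun ω => ((X₁ ω, X₂ ω), C ω)) (fun ω => (U₁ ω, U₂ ω)) P)
    (hindU : IndepFun U₁ U₂ P)
    (ψ₁ ψ₂ : E d → ℝ)
    (hψ₁ : Measurable ψ₁) (hψ₂ : Measurable ψ₂)
    (T₁ T₂ : Set (ℝ × ℝ)) (hT₁ : MeasurableSet T₁) (hT₂ : MeasurableSet T₂)
    (G₁ G₂ : ℝ → ENNReal)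
    (h₁ : ∀ a : ℝ, (P.map U₁) {u | (a, u) ∈ T₁} = G₁ a)
    (h₂ : ∀ a : ℝ, (P.map U₂) {u | (a, u) ∈ T₂} = G₂ a)
    (A : Set ((Fin d → ℝ) × (Fin d → ℝ))) (hA : MeasurableSet A) :
    P {ω | (ψ₁ ((X₁ ω, X₂ ω), C ω), U₁ ω) ∈ T₁ ∧ (ψ₂ ((X₁ ω, X₂ ω), C ω), U₂ ω) ∈ T₂
        ∧ (X₁ ω, X₂ ω) ∈ A}
      = ∫⁻ w in Prod.fst ⁻¹' A, G₁ (ψ₁ w) * G₂ (ψ₂ w)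
          ∂(P.map fun ω => ((X₁ ω, X₂ ω), C ω)) := by
  set W : Ω → E d := fun ω => ((X₁ ω, X₂ ω), C ω) with hW
  set V : Ω → ℝ × ℝ := fun ω => (U₁ ω, U₂ ω) with hV
  have hWm : Measurable W := ((hX₁.prodMk hX₂).prodMk hC)
  have hVm : Measurable V := hU₁.prodMk hU₂
  have hmapP : P.map (fun ω => (W ω, V ω)) = (P.map W).prod (P.map V) :=
    (indepFun_iff_map_prod_eq_prod_map_map hWm.aemeasurable hVm.aemeasurable).mp hind
  have hmapV : P.map V = (P.map U₁).prod (P.map U₂) :=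
    (indepFun_iff_map_prod_eq_prod_map_map hU₁.aemeasurable hU₂.aemeasurable).mp hindU
  haveI : IsProbabilityMeasure (P.map U₁) := Measure.isProbabilityMeasure_map hU₁.aemeasurable
  haveI : IsProbabilityMeasure (P.map U₂) := Measure.isProbabilityMeasure_map hU₂.aemeasurable
  haveI : IsProbabilityMeasure (P.map V) := Measure.isProbabilityMeasure_map hVm.aemeasurable
  haveI : IsProbabilityMeasure (P.map W) := Measure.isProbabilityMeasure_map hWm.aemeasurable
  set S : Set (E d × (ℝ × ℝ)) :=
    {p | (ψ₁ p.1, p.2.1) ∈ T₁ ∧ (ψ₂ p.1, p.2.2) ∈ T₂ ∧ p.1.1 ∈ A} with hSdef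
  have m1 : Measurable fun p : E d × (ℝ × ℝ) => (ψ₁ p.1, p.2.1) :=
    (hψ₁.comp measurable_fst).prodMk (measurable_fst.comp measurable_snd)
  have m2 : Measurable fun p : E d × (ℝ × ℝ) => (ψ₂ p.1, p.2.2) :=
    (hψ₂.comp measurable_fst).prodMk (measurable_snd.comp measurable_snd)
  have m3 : Measurable fun p : E d × (ℝ × ℝ) => p.1.1 := measurable_fst.comp measurable_fst
  have hSm : MeasurableSet S := (m1 hT₁).inter ((m2 hT₂).inter (m3 hA))
  have hev : {ω | (ψ₁ ((X₁ ω, X₂ ω), C ω), U₁ ω) ∈ T₁ ∧ (ψ₂ ((X₁ ω, X₂ ω), C ω), U₂ ω) ∈ T₂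
      ∧ (X₁ ω, X₂ ω) ∈ A} = (fun ω => (W ω, V ω)) ⁻¹' S := rfl
  rw [hev, ← Measure.map_apply (hWm.prodMk hVm) hSm, hmapP, Measure.prod_apply hSm,
    ← lintegral_indicator (measurable_fst hA)]
  refine lintegral_congr fun w => ?_
  by_cases hwA : w.1 ∈ A
  · rw [Set.indicator_of_mem (show w ∈ Prod.fst ⁻¹' A from hwA)]
    have hslice : Prod.mk w ⁻¹' S = {u | (ψ₁ w, u) ∈ T₁} ×ˢ {u | (ψ₂ w, u) ∈ T₂} := by
      ext v; simp [hSdef, Set.mem_prod, hwA]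
    rw [hslice, hmapV, Measure.prod_prod, h₁, h₂]
  · rw [Set.indicator_of_notMem (show w ∉ Prod.fst ⁻¹' A from hwA)]
    have hslice : Prod.mk w ⁻¹' S = ∅ := by
      ext v; simp [hSdef, hwA]
    rw [hslice, measure_empty]

end Key

end PanelLogit
namespace PanelLogit

variable {d : ℕ} {Ω : Type*} [MeasurableSpace Ω]

lemma cdf_Iic (P : Measure Ω) (U : Ω → ℝ) (hU : Measurable U)
    (hlog : ∀ u : ℝ, P {ω | U ω ≤ u} = ENNReal.ofReal (logisticCDF u)) (a : ℝ) :
    (P.map U) (Set.Iic a) = ENNReal.ofReal (logisticCDF a) := by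
  rw [Measure.map_apply hU measurableSet_Iic]
  exact hlog a

lemma cdf_Ioi (P : Measure Ω) [IsProbabilityMeasure P] (U : Ω → ℝ) (hU : Measurable U)
    (hlog : ∀ u : ℝ, P {ω | U ω ≤ u} = ENNReal.ofReal (logisticCDF u)) (a : ℝ) :
    (P.map U) (Set.Ioi a) = ENNReal.ofReal (1 - logisticCDF a) := by
  haveI : IsProbabilityMeasure (P.map U) := Measure.isProbabilityMeasure_map hU.aemeasurable
  rw [← Set.compl_Iic, prob_compl_eq_one_sub measurableSet_Iic, cdf_Iic P U hU hlog a,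
    ENNReal.ofReal_sub 1 (logisticCDF_pos a).le, ENNReal.ofReal_one]

/-- Joint law of `(Y₁,Y₂,X₁,X₂)` on the `(1,0)` pattern. -/
lemma panel_map_10 (P : Measure Ω) [IsProbabilityMeasure P]
    (β : Fin d → ℝ) (X₁ X₂ : Ω → Fin d → ℝ) (C : Ω → ℝ) (U₁ U₂ : Ω → ℝ)
    (hX₁ : Measurable X₁) (hX₂ : Measurable X₂) (hC : Measurable C)
    (hU₁ : Measurable U₁) (hU₂ : Measurable U₂)
    (hind : IndepFun (fun ω => ((X₁ ω, X₂ ω), C ω)) (fun ω => (U₁ ω, U₂ ω)) P)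
    (hindU : IndepFun U₁ U₂ P)
    (hlog₁ : ∀ u : ℝ, P {ω | U₁ ω ≤ u} = ENNReal.ofReal (logisticCDF u))
    (hlog₂ : ∀ u : ℝ, P {ω | U₂ ω ≤ u} = ENNReal.ofReal (logisticCDF u))
    (Y₁ Y₂ : Ω → ℝ)
    (hY₁ : Y₁ = fun ω => if 0 ≤ X₁ ω ⬝ᵥ β + C ω - U₁ ω then 1 else 0)
    (hY₂ : Y₂ = fun ω => if 0 ≤ X₂ ω ⬝ᵥ β + C ω - U₂ ω then 1 else 0)
    (A : Set ((Fin d → ℝ) × (Fin d → ℝ))) (hA : MeasurableSet A) :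
    (P.map (fun ω => (Y₁ ω, Y₂ ω, X₁ ω, X₂ ω))) ({(1:ℝ)} ×ˢ {(0:ℝ)} ×ˢ A)
      = ∫⁻ w in Prod.fst ⁻¹' A, gOne β w ∂(P.map fun ω => ((X₁ ω, X₂ ω), C ω)) := by
  have hY₁m : Measurable Y₁ := by
    rw [hY₁]
    exact Measurable.ite
      (measurableSet_le measurable_const ((((measurable_dot β).comp hX₁).add hC).sub hU₁))
      measurable_const measurable_const
  have hY₂m : Measurable Y₂ := by
    rw [hY₂]
    exact Measurable.ite
      (measurableSet_le measurable_const ((((measurable_dot β).comp hX₂).add hC).sub hU₂))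
      measurable_const measurable_const
  rw [Measure.map_apply (hY₁m.prodMk (hY₂m.prodMk (hX₁.prodMk hX₂)))
    ((measurableSet_singleton 1).prod ((measurableSet_singleton 0).prod hA))]
  have hev : (fun ω => (Y₁ ω, Y₂ ω, X₁ ω, X₂ ω)) ⁻¹' ({(1:ℝ)} ×ˢ {(0:ℝ)} ×ˢ A)
      = {ω | ((fun w : E d => w.1.1 ⬝ᵥ β + w.2) ((X₁ ω, X₂ ω), C ω), U₁ ω)
            ∈ {p : ℝ × ℝ | p.2 ≤ p.1}
          ∧ ((fun w : E d => w.1.2 ⬝ᵥ β + w.2) ((X₁ ω, X₂ ω), C ω), U₂ ω)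
            ∈ {p : ℝ × ℝ | p.1 < p.2}
          ∧ (X₁ ω, X₂ ω) ∈ A} := by
    ext ω
    simp only [Set.mem_preimage, Set.mem_prod, Set.mem_singleton_iff, Set.mem_setOf_eq,
      hY₁, hY₂]
    constructor
    · rintro ⟨h1, h2, h3⟩
      refine ⟨?_, ?_, h3⟩
      · by_contra hc
        rw [if_neg (by intro hle; exact hc (by linarith [sub_nonneg.mp hle]))] at h1
        · norm_num at h1
      · by_contra hc
        push_neg at hc
        rw [if_pos (by linarith)] at h2
        norm_num at h2
    · rintro ⟨h1, h2, h3⟩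
      refine ⟨?_, ?_, h3⟩
      · rw [if_pos (by linarith)]
      · rw [if_neg (by intro hle; linarith)]
  rw [hev]
  have := panel_key P X₁ X₂ C U₁ U₂ hX₁ hX₂ hC hU₁ hU₂ hind hindU
    (fun w : E d => w.1.1 ⬝ᵥ β + w.2) (fun w : E d => w.1.2 ⬝ᵥ β + w.2)
    (measurable_psi₁ β) (measurable_psi₂ β)
    {p : ℝ × ℝ | p.2 ≤ p.1} {p : ℝ × ℝ | p.1 < p.2}
    (measurableSet_le measurable_snd measurable_fst)
    (measurableSet_lt measurable_fst measurable_snd)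
    (fun a => ENNReal.ofReal (logisticCDF a)) (fun a => ENNReal.ofReal (1 - logisticCDF a))
    (fun a => cdf_Iic P U₁ hU₁ hlog₁ a)
    (fun a => cdf_Ioi P U₂ hU₂ hlog₂ a)
    A hA
  exact this

/-- Joint law of `(Y₁,Y₂,X₁,X₂)` on the `(0,1)` pattern. -/
lemma panel_map_01 (P : Measure Ω) [IsProbabilityMeasure P]
    (β : Fin d → ℝ) (X₁ X₂ : Ω → Fin d → ℝ) (C : Ω → ℝ) (U₁ U₂ : Ω → ℝ)
    (hX₁ : Measurable X₁) (hX₂ : Measurable X₂) (hC : Measurable C)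
    (hU₁ : Measurable U₁) (hU₂ : Measurable U₂)
    (hind : IndepFun (fun ω => ((X₁ ω, X₂ ω), C ω)) (fun ω => (U₁ ω, U₂ ω)) P)
    (hindU : IndepFun U₁ U₂ P)
    (hlog₁ : ∀ u : ℝ, P {ω | U₁ ω ≤ u} = ENNReal.ofReal (logisticCDF u))
    (hlog₂ : ∀ u : ℝ, P {ω | U₂ ω ≤ u} = ENNReal.ofReal (logisticCDF u))
    (Y₁ Y₂ : Ω → ℝ)
    (hY₁ : Y₁ = fun ω => if 0 ≤ X₁ ω ⬝ᵥ β + C ω - U₁ ω then 1 else 0)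
    (hY₂ : Y₂ = fun ω => if 0 ≤ X₂ ω ⬝ᵥ β + C ω - U₂ ω then 1 else 0)
    (A : Set ((Fin d → ℝ) × (Fin d → ℝ))) (hA : MeasurableSet A) :
    (P.map (fun ω => (Y₁ ω, Y₂ ω, X₁ ω, X₂ ω))) ({(0:ℝ)} ×ˢ {(1:ℝ)} ×ˢ A)
      = ∫⁻ w in Prod.fst ⁻¹' A, gTwo β w ∂(P.map fun ω => ((X₁ ω, X₂ ω), C ω)) := by
  have hY₁m : Measurable Y₁ := by
    rw [hY₁]
    exact Measurable.ite
      (measurableSet_le measurable_const ((((measurable_dot β).comp hX₁).add hC).sub hU₁))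
      measurable_const measurable_const
  have hY₂m : Measurable Y₂ := by
    rw [hY₂]
    exact Measurable.ite
      (measurableSet_le measurable_const ((((measurable_dot β).comp hX₂).add hC).sub hU₂))
      measurable_const measurable_const
  rw [Measure.map_apply (hY₁m.prodMk (hY₂m.prodMk (hX₁.prodMk hX₂)))
    ((measurableSet_singleton 0).prod ((measurableSet_singleton 1).prod hA))]
  have hev : (fun ω => (Y₁ ω, Y₂ ω, X₁ ω, X₂ ω)) ⁻¹' ({(0:ℝ)} ×ˢ {(1:ℝ)} ×ˢ A)
      = {ω | ((fun w : E d => w.1.1 ⬝ᵥ β + w.2) ((X₁ ω, X₂ ω), C ω), U₁ ω)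
            ∈ {p : ℝ × ℝ | p.1 < p.2}
          ∧ ((fun w : E d => w.1.2 ⬝ᵥ β + w.2) ((X₁ ω, X₂ ω), C ω), U₂ ω)
            ∈ {p : ℝ × ℝ | p.2 ≤ p.1}
          ∧ (X₁ ω, X₂ ω) ∈ A} := by
    ext ω
    simp only [Set.mem_preimage, Set.mem_prod, Set.mem_singleton_iff, Set.mem_setOf_eq,
      hY₁, hY₂]
    constructor
    · rintro ⟨h1, h2, h3⟩
      refine ⟨?_, ?_, h3⟩
      · by_contra hc
        push_neg at hc
        rw [if_pos (by linarith)] at h1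
        norm_num at h1
      · by_contra hc
        rw [if_neg (by intro hle; exact hc (by linarith [sub_nonneg.mp hle]))] at h2
        · norm_num at h2
    · rintro ⟨h1, h2, h3⟩
      refine ⟨?_, ?_, h3⟩
      · rw [if_neg (by intro hle; linarith)]
      · rw [if_pos (by linarith)]
  rw [hev]
  exact panel_key P X₁ X₂ C U₁ U₂ hX₁ hX₂ hC hU₁ hU₂ hind hindU
    (fun w : E d => w.1.1 ⬝ᵥ β + w.2) (fun w : E d => w.1.2 ⬝ᵥ β + w.2)
    (measurable_psi₁ β) (measurable_psi₂ β)
    {p : ℝ × ℝ | p.1 < p.2} {p : ℝ × ℝ | p.2 ≤ p.1}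
    (measurableSet_lt measurable_fst measurable_snd)
    (measurableSet_le measurable_snd measurable_fst)
    (fun a => ENNReal.ofReal (1 - logisticCDF a)) (fun a => ENNReal.ofReal (logisticCDF a))
    (fun a => cdf_Ioi P U₁ hU₁ hlog₁ a)
    (fun a => cdf_Iic P U₂ hU₂ hlog₂ a)
    A hA

end PanelLogit
namespace PanelLogit

variable {d : ℕ}

lemma wd_lemma (ρ : Measure (E d)) (b : Fin d → ℝ) :
    (Measure.map hmap (ρ.withDensity (gTwo b))).withDensity (phi b)
      = Measure.map hmap (ρ.withDensity (gOne b)) := by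
  refine Measure.ext fun B hB => ?_
  have hg : Measurable fun w : E d => phi b (hmap w) :=
    (measurable_phi b).comp measurable_hmap
  rw [withDensity_apply _ hB, Measure.map_apply measurable_hmap hB,
    withDensity_apply _ (measurable_hmap hB),
    setLIntegral_map hB (measurable_phi b) measurable_hmap,
    restrict_withDensity (measurable_hmap hB),
    lintegral_withDensity_eq_lintegral_mul _ (measurable_gTwo b) hg]
  exact (lintegral_congr fun w => (gOne_eq b w)).symm

end PanelLogit

set_option maxHeartbeats 1000000 in
open PanelLogit in
/-- Lemma 1 (logit case): in a two-period binary-response panel structure with logistic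
errors, if the topological support of the law of `X₁ − X₂` is not contained in any proper
linear subspace of `ℝ^d` (its span is everything) and the joint laws of `(Y₁,Y₂,X₁,X₂)`
coincide across two structures, then `β = β'`. -/
theorem stmt_3 {d : ℕ}
    {Ω : Type*} [MeasurableSpace Ω] (P : Measure Ω) [IsProbabilityMeasure P]
    {Ω' : Type*} [MeasurableSpace Ω'] (P' : Measure Ω') [IsProbabilityMeasure P']
    (β : Fin d → ℝ) (X₁ X₂ : Ω → Fin d → ℝ) (C : Ω → ℝ) (U₁ U₂ : Ω → ℝ)
    (β' : Fin d → ℝ) (X₁' X₂' : Ω' → Fin d → ℝ) (C' : Ω' → ℝ) (U₁' U₂' : Ω' → ℝ)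
    (hX₁ : Measurable X₁) (hX₂ : Measurable X₂) (hC : Measurable C)
    (hU₁ : Measurable U₁) (hU₂ : Measurable U₂)
    (hX₁' : Measurable X₁') (hX₂' : Measurable X₂') (hC' : Measurable C')
    (hU₁' : Measurable U₁') (hU₂' : Measurable U₂')
    -- mutual independence of the pair `(X, C)`, `U₁`, and `U₂`
    (hind : IndepFun (fun ω => ((X₁ ω, X₂ ω), C ω)) (fun ω => (U₁ ω, U₂ ω)) P)
    (hindU : IndepFun U₁ U₂ P)
    (hind' : IndepFun (fun ω => ((X₁' ω, X₂' ω), C' ω)) (fun ω => (U₁' ω, U₂' ω)) P')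
    (hindU' : IndepFun U₁' U₂' P')
    -- standard logistic errors
    (hlog₁ : ∀ u : ℝ, P {ω | U₁ ω ≤ u} = ENNReal.ofReal (logisticCDF u))
    (hlog₂ : ∀ u : ℝ, P {ω | U₂ ω ≤ u} = ENNReal.ofReal (logisticCDF u))
    (hlog₁' : ∀ u : ℝ, P' {ω | U₁' ω ≤ u} = ENNReal.ofReal (logisticCDF u))
    (hlog₂' : ∀ u : ℝ, P' {ω | U₂' ω ≤ u} = ENNReal.ofReal (logisticCDF u))
    -- outcomes `Y_t = 1{X_t·β + C − U_t ≥ 0}`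
    (Y₁ Y₂ : Ω → ℝ) (Y₁' Y₂' : Ω' → ℝ)
    (hY₁ : Y₁ = fun ω => if 0 ≤ X₁ ω ⬝ᵥ β + C ω - U₁ ω then 1 else 0)
    (hY₂ : Y₂ = fun ω => if 0 ≤ X₂ ω ⬝ᵥ β + C ω - U₂ ω then 1 else 0)
    (hY₁' : Y₁' = fun ω => if 0 ≤ X₁' ω ⬝ᵥ β' + C' ω - U₁' ω then 1 else 0)
    (hY₂' : Y₂' = fun ω => if 0 ≤ X₂' ω ⬝ᵥ β' + C' ω - U₂' ω then 1 else 0)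
    -- the support of the law of `X₁ − X₂` spans `ℝ^d`
    (hspan : Submodule.span ℝ (msupport (P.map fun ω => X₁ ω - X₂ ω)) = ⊤)
    -- equal joint laws of `(Y₁, Y₂, X₁, X₂)`
    (hlaw : P.map (fun ω => (Y₁ ω, Y₂ ω, X₁ ω, X₂ ω)) =
      P'.map (fun ω => (Y₁' ω, Y₂' ω, X₁' ω, X₂' ω))) :
    β = β' := by
  classical
  haveI : IsProbabilityMeasure (P.map (fun ω => ((X₁ ω, X₂ ω), C ω))) :=
    Measure.isProbabilityMeasure_map ((hX₁.prodMk hX₂).prodMk hC).aemeasurable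
  have hI : ∀ A : Set ((Fin d → ℝ) × (Fin d → ℝ)), MeasurableSet A →
      ∫⁻ w in Prod.fst ⁻¹' A, gOne β w ∂(P.map (fun ω => ((X₁ ω, X₂ ω), C ω))) = ∫⁻ w in Prod.fst ⁻¹' A, gOne β' w ∂(P'.map (fun ω => ((X₁' ω, X₂' ω), C' ω))) := by
    intro A hA
    have e1 := panel_map_10 P β X₁ X₂ C U₁ U₂ hX₁ hX₂ hC hU₁ hU₂ hind hindU hlog₁ hlog₂
        Y₁ Y₂ hY₁ hY₂ A hA
    have e2 := panel_map_10 P' β' X₁' X₂' C' U₁' U₂' hX₁' hX₂' hC' hU₁' hU₂' hind' hindU'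
        hlog₁' hlog₂' Y₁' Y₂' hY₁' hY₂' A hA
    rw [hlaw] at e1
    exact e1.symm.trans e2
  have hII : ∀ A : Set ((Fin d → ℝ) × (Fin d → ℝ)), MeasurableSet A →
      ∫⁻ w in Prod.fst ⁻¹' A, gTwo β w ∂(P.map (fun ω => ((X₁ ω, X₂ ω), C ω))) = ∫⁻ w in Prod.fst ⁻¹' A, gTwo β' w ∂(P'.map (fun ω => ((X₁' ω, X₂' ω), C' ω))) := by
    intro A hA
    have e1 := panel_map_01 P β X₁ X₂ C U₁ U₂ hX₁ hX₂ hC hU₁ hU₂ hind hindU hlog₁ hlog₂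
        Y₁ Y₂ hY₁ hY₂ A hA
    have e2 := panel_map_01 P' β' X₁' X₂' C' U₁' U₂' hX₁' hX₂' hC' hU₁' hU₂' hind' hindU'
        hlog₁' hlog₂' Y₁' Y₂' hY₁' hY₂' A hA
    rw [hlaw] at e1
    exact e1.symm.trans e2
  set ν₂ := Measure.map hmap ((P.map (fun ω => ((X₁ ω, X₂ ω), C ω))).withDensity (gTwo β)) with hν₂def
  have hν₂eq : ν₂ = Measure.map hmap ((P'.map (fun ω => ((X₁' ω, X₂' ω), C' ω))).withDensity (gTwo β')) := by
    refine Measure.ext fun B hB => ?_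
    rw [hν₂def, Measure.map_apply measurable_hmap hB, Measure.map_apply measurable_hmap hB,
      withDensity_apply _ (measurable_hmap hB), withDensity_apply _ (measurable_hmap hB)]
    have hpre : hmap ⁻¹' B
        = Prod.fst ⁻¹' ((fun p : (Fin d → ℝ) × (Fin d → ℝ) => p.1 - p.2) ⁻¹' B) := rfl
    rw [hpre]
    exact hII _ ((measurable_fst.sub measurable_snd) hB)
  have hν₁eq : Measure.map hmap ((P.map (fun ω => ((X₁ ω, X₂ ω), C ω))).withDensity (gOne β))
      = Measure.map hmap ((P'.map (fun ω => ((X₁' ω, X₂' ω), C' ω))).withDensity (gOne β')) := by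
    refine Measure.ext fun B hB => ?_
    rw [Measure.map_apply measurable_hmap hB, Measure.map_apply measurable_hmap hB,
      withDensity_apply _ (measurable_hmap hB), withDensity_apply _ (measurable_hmap hB)]
    have hpre : hmap ⁻¹' B
        = Prod.fst ⁻¹' ((fun p : (Fin d → ℝ) × (Fin d → ℝ) => p.1 - p.2) ⁻¹' B) := rfl
    rw [hpre]
    exact hI _ ((measurable_fst.sub measurable_snd) hB)
  have hwd : ν₂.withDensity (phi β) = ν₂.withDensity (phi β') := by
    calc ν₂.withDensity (phi β)
        = Measure.map hmap ((P.map (fun ω => ((X₁ ω, X₂ ω), C ω))).withDensity (gOne β)) := by rw [hν₂def, wd_lemma]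
      _ = Measure.map hmap ((P'.map (fun ω => ((X₁' ω, X₂' ω), C' ω))).withDensity (gOne β')) := hν₁eq
      _ = (Measure.map hmap ((P'.map (fun ω => ((X₁' ω, X₂' ω), C' ω))).withDensity (gTwo β'))).withDensity (phi β') :=
          (wd_lemma (P'.map (fun ω => ((X₁' ω, X₂' ω), C' ω))) β').symm
      _ = ν₂.withDensity (phi β') := by rw [← hν₂eq]
  have hfin : ∫⁻ z, phi β z ∂ν₂ ≠ ⊤ := by
    have h1 : ∫⁻ z, phi β z ∂ν₂ = (ν₂.withDensity (phi β)) Set.univ := by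
      rw [withDensity_apply _ MeasurableSet.univ, Measure.restrict_univ]
    have h2 : ((P.map (fun ω => ((X₁ ω, X₂ ω), C ω))).withDensity (gOne β)) Set.univ ≤ 1 := by
      rw [withDensity_apply _ MeasurableSet.univ, Measure.restrict_univ]
      calc ∫⁻ w, gOne β w ∂(P.map (fun ω => ((X₁ ω, X₂ ω), C ω))) ≤ ∫⁻ _, 1 ∂(P.map (fun ω => ((X₁ ω, X₂ ω), C ω))) := lintegral_mono (gOne_le_one β)
        _ = 1 := by simp
    have h3 : (ν₂.withDensity (phi β)) Set.univ ≤ 1 := by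
      rw [hν₂def, wd_lemma, Measure.map_apply measurable_hmap MeasurableSet.univ,
        Set.preimage_univ]
      exact h2
    rw [h1]
    exact (lt_of_le_of_lt h3 ENNReal.one_lt_top).ne
  have hae : phi β =ᵐ[ν₂] phi β' :=
    (withDensity_eq_iff (measurable_phi β).aemeasurable
      (measurable_phi β').aemeasurable hfin).mp hwd
  have haedot : ∀ᵐ z ∂ν₂, z ⬝ᵥ β = z ⬝ᵥ β' := by
    refine hae.mono fun z hz => ?_
    have h := (ENNReal.ofReal_eq_ofReal_iff (Real.exp_pos _).le (Real.exp_pos _).le).mp hz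
    exact Real.exp_eq_exp.mp h
  set N := {z : Fin d → ℝ | ¬ z ⬝ᵥ β = z ⬝ᵥ β'} with hNdef
  have hNm : MeasurableSet N :=
    (measurableSet_eq_fun (measurable_dot β) (measurable_dot β')).compl
  have hν₂N : ν₂ N = 0 := ae_iff.mp haedot
  have hμN : (P.map (fun ω => ((X₁ ω, X₂ ω), C ω))) (hmap ⁻¹' N) = 0 := by
    have h0 : ∫⁻ w in hmap ⁻¹' N, gTwo β w ∂(P.map (fun ω => ((X₁ ω, X₂ ω), C ω))) = 0 := by
      rw [← withDensity_apply _ (measurable_hmap hNm),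
        ← Measure.map_apply measurable_hmap hNm, ← hν₂def]
      exact hν₂N
    have h1 := (setLIntegral_eq_zero_iff (measurable_hmap hNm) (measurable_gTwo β)).mp h0
    have h2 : ∀ᵐ w ∂(P.map (fun ω => ((X₁ ω, X₂ ω), C ω))), w ∉ hmap ⁻¹' N := h1.mono fun w hw hmem => gTwo_ne_zero β w (hw hmem)
    exact measure_eq_zero_iff_ae_notMem.mpr h2
  have hZN : (P.map fun ω => X₁ ω - X₂ ω) N = 0 := by
    rw [Measure.map_apply (f := fun ω => X₁ ω - X₂ ω) (hX₁.sub hX₂) hNm]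
    rw [Measure.map_apply ((hX₁.prodMk hX₂).prodMk hC) (measurable_hmap hNm)] at hμN
    exact hμN
  have hsupp : msupport (P.map fun ω => X₁ ω - X₂ ω) ⊆ {z | z ⬝ᵥ β = z ⬝ᵥ β'} := by
    intro z hz
    by_contra hne
    have hopen : IsOpen N := (isClosed_eq (continuous_dot β) (continuous_dot β')).isOpen_compl
    have hpos := hz N hopen hne
    rw [hZN] at hpos
    exact lt_irrefl 0 hpos
  let L : (Fin d → ℝ) →ₗ[ℝ] ℝ :=
    { toFun := fun z => z ⬝ᵥ (β - β')
      map_add' := fun x y => add_dotProduct x y (β - β')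
      map_smul' := fun c x => by
        simp only [smul_dotProduct, dotProduct_sub, smul_eq_mul,
          RingHom.id_apply]
        ring }
  have hker : Submodule.span ℝ (msupport (P.map fun ω => X₁ ω - X₂ ω)) ≤ LinearMap.ker L := by
    rw [Submodule.span_le]
    intro z hz
    have hzz := hsupp hz
    simp only [SetLike.mem_coe, LinearMap.mem_ker]
    show z ⬝ᵥ (β - β') = 0
    rw [dotProduct_sub, sub_eq_zero]
    exact hzz
  rw [hspan] at hker
  have hL : (β - β') ⬝ᵥ (β - β') = 0 := hker Submodule.mem_top
  exact sub_eq_zero.mp (dotProduct_self_eq_zero.mp hL)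
end

section
/- Assume U is independent of (X,C) and index sufficiency holds: for every bounded measurable g : ℝ → ℝ, E[g(C) | σ(X)] = E[g(C) | σ(V)] P-almost surely, where V = v(X). Let κ = condDistrib C V P and define m(u,w) = ∫_ℝ F_U(u + c) dκ(w)(c). Then E[Y | σ(X·β, V)] = m(X·β, V) P-almost surely; that is, the observable regression of Y on the pair (X·β, V) coincides with the structural function m built from the error CDF and the conditional heterogeneity distribution given the index. (The core step of Theorem 1 showing that P(Y_t=1 | X_t'β₀ = u, V = v) equals ∫ F_{U_t}(u+c) dF_{C|V}(c|v).) -/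
open MeasureTheory ProbabilityTheory Matrix Set

/-- Assume `U ⟂ (X,C)` and index sufficiency: for every bounded measurable `g : ℝ → ℝ`,
`E[g(C) | σ(X)] = E[g(C) | σ(V)]` `P`-a.s., where `V = v(X)`.  Let `κ = condDistrib C V P`
and `m(u,w) = ∫ F_U(u + c) dκ(w)(c)`.  Then `E[Y | σ(X·β, V)] = m(X·β, V)` `P`-a.s.:
the observable regression of `Y` on `(X·β, V)` coincides with the structural function
built from the error CDF and the conditional heterogeneity distribution given the index. -/
theorem stmt_6 {d dV : ℕ} {Ω : Type*} [MeasurableSpace Ω] (P : Measure Ω)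
    [IsProbabilityMeasure P] (β : Fin d → ℝ)
    (X : Ω → Fin d → ℝ) (C : Ω → ℝ) (U : Ω → ℝ)
    (hX : Measurable X) (hC : Measurable C) (hU : Measurable U)
    (v : (Fin d → ℝ) → Fin dV → ℝ) (hv : Measurable v)
    (hind : IndepFun U (fun ω => (X ω, C ω)) P)
    -- index sufficiency
    (hsuff : ∀ g : ℝ → ℝ, Measurable g → (∃ M, ∀ x, |g x| ≤ M) →
      P[(fun ω => g (C ω)) | MeasurableSpace.comap X inferInstance] =ᵐ[P]
        P[(fun ω => g (C ω)) |
          MeasurableSpace.comap (fun ω => v (X ω)) inferInstance])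
    (Y : Ω → ℝ) (hY : Y = fun ω => if 0 ≤ X ω ⬝ᵥ β + C ω - U ω then 1 else 0)
    (F : ℝ → ℝ) (hF : ∀ u, F u = (P {ω | U ω ≤ u}).toReal) :
    P[Y | MeasurableSpace.comap (fun ω => (X ω ⬝ᵥ β, v (X ω))) inferInstance] =ᵐ[P]
      fun ω => ∫ c, F (X ω ⬝ᵥ β + c)
        ∂(condDistrib C (fun ω' => v (X ω')) P (v (X ω))) := by
  -- measurability of the index maps
  have hd : Measurable fun x : Fin d → ℝ => x ⬝ᵥ β := by
    have : (fun x : Fin d → ℝ => x ⬝ᵥ β) = fun x => ∑ i, x i * β i := rfl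
    rw [this]
    exact Finset.measurable_sum _ fun i _ => (measurable_pi_apply i).mul_const _
  have hW : Measurable (fun ω => (X ω, C ω)) := hX.prodMk hC
  have hV' : Measurable (fun ω => v (X ω)) := hv.comp hX
  have hT : Measurable (fun ω => (X ω ⬝ᵥ β, v (X ω))) := (hd.comp hX).prodMk hV'
  -- properties of F
  have hFmono : Monotone F := by
    intro a b hab
    rw [hF a, hF b]
    exact ENNReal.toReal_mono (measure_ne_top _ _)
      (measure_mono fun ω h => le_trans h hab)
  have hFmeas : Measurable F := hFmono.measurable
  have hF0 : ∀ u, 0 ≤ F u := fun u => (hF u) ▸ ENNReal.toReal_nonneg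
  have hF1 : ∀ u, F u ≤ 1 := fun u => by
    rw [hF u]
    exact ENNReal.toReal_one ▸
      (ENNReal.toReal_le_toReal (measure_ne_top _ _) ENNReal.one_ne_top).mpr prob_le_one
  have hFnorm : ∀ u, ‖F u‖ ≤ 1 := fun u => by
    rw [Real.norm_eq_abs, abs_of_nonneg (hF0 u)]; exact hF1 u
  have hFU : ∀ a : ℝ, F a = ((P.map U) (Iic a)).toReal := fun a => by
    rw [hF, Measure.map_apply hU measurableSet_Iic]; rfl
  -- Step 1: by independence, E[Y | σ(X,C)] = F(X·β + C)
  have hmap : P.map (fun ω => ((X ω, C ω), U ω)) = (P.map (fun ω => (X ω, C ω))).prod (P.map U) :=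
    (indepFun_iff_map_prod_eq_prod_map_map hW.aemeasurable hU.aemeasurable).mp hind.symm
  have hcd : ∀ᵐ ω ∂P, condDistrib U (fun ω => (X ω, C ω)) P (X ω, C ω) = P.map U := by
    have h := condDistrib_ae_eq_of_measure_eq_compProd (μ := P) (fun ω => (X ω, C ω)) hU.aemeasurable
      (κ := Kernel.const _ (P.map U)) (by rw [Measure.compProd_const]; exact hmap)
    have h' := ae_of_ae_map hW.aemeasurable h
    filter_upwards [h'] with ω hω
    rw [hω, Kernel.const_apply]
  have hf1meas : Measurable (fun q : ((Fin d → ℝ) × ℝ) × ℝ =>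
      if q.2 ≤ q.1.1 ⬝ᵥ β + q.1.2 then (1:ℝ) else 0) :=
    Measurable.ite (measurableSet_le measurable_snd
      ((hd.comp (measurable_fst.comp measurable_fst)).add
        (measurable_snd.comp measurable_fst))) measurable_const measurable_const
  have hYeq : Y = fun ω =>
      (fun q : ((Fin d → ℝ) × ℝ) × ℝ => if q.2 ≤ q.1.1 ⬝ᵥ β + q.1.2 then (1:ℝ) else 0)
        ((X ω, C ω), U ω) := by
    funext ω; rw [hY]; simp only [sub_nonneg]
  have hYint : Integrable Y P := by
    rw [hYeq]
    refine (integrable_const (1:ℝ)).mono'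
      ((hf1meas.comp (hW.prodMk hU)).aestronglyMeasurable) ?_
    filter_upwards with ω
    by_cases h : U ω ≤ X ω ⬝ᵥ β + C ω <;> simp [h]
  have h1 : P[Y | MeasurableSpace.comap (fun ω => (X ω, C ω)) inferInstance] =ᵐ[P]
      fun ω => F (X ω ⬝ᵥ β + C ω) := by
    rw [hYeq]
    have h := condExp_prod_ae_eq_integral_condDistrib (μ := P) hW hU.aemeasurable
      hf1meas.stronglyMeasurable (hYeq ▸ hYint)
    refine h.trans ?_
    filter_upwards [hcd] with ω hω
    rw [hω]
    have hfun : (fun u => if u ≤ X ω ⬝ᵥ β + C ω then (1:ℝ) else 0)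
        = (Iic (X ω ⬝ᵥ β + C ω)).indicator (fun _ => (1:ℝ)) := by
      funext u; by_cases h : u ≤ X ω ⬝ᵥ β + C ω <;> simp [indicator_apply, h]
    show ∫ u, (if u ≤ X ω ⬝ᵥ β + C ω then (1:ℝ) else 0) ∂(P.map U) = F (X ω ⬝ᵥ β + C ω)
    rw [hfun, integral_indicator_const _ measurableSet_Iic, hFU]
    simp [Measure.real]
  -- Step 2: index sufficiency implies equality of conditional distributions
  have hker : ∀ᵐ ω ∂P, condDistrib C X P (X ω)
      = condDistrib C (fun ω' => v (X ω')) P (v (X ω)) := by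
    have hq : ∀ q : ℚ, ∀ᵐ ω ∂P, condDistrib C X P (X ω) (Iio (q:ℝ))
        = condDistrib C (fun ω' => v (X ω')) P (v (X ω)) (Iio (q:ℝ)) := by
      intro q
      have hXq := condDistrib_ae_eq_condExp (μ := P) hX hC (measurableSet_Iio (a := (q:ℝ)))
      have hVq := condDistrib_ae_eq_condExp (μ := P) hV' hC (measurableSet_Iio (a := (q:ℝ)))
      have hg : Measurable ((Iio (q:ℝ)).indicator (fun _ => (1:ℝ))) :=
        measurable_const.indicator measurableSet_Iio
      have hgb : ∃ M, ∀ x, |(Iio (q:ℝ)).indicator (fun _ => (1:ℝ)) x| ≤ M :=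
        ⟨1, fun x => by by_cases h : x ∈ Iio (q:ℝ) <;> simp [indicator_apply, h]⟩
      have hs := hsuff _ hg hgb
      have hpre : (fun ω => (Iio (q:ℝ)).indicator (fun _ => (1:ℝ)) (C ω))
          = (C ⁻¹' (Iio (q:ℝ))).indicator (fun _ => (1:ℝ)) := by
        funext ω; by_cases h : C ω < (q:ℝ) <;> simp [indicator_apply, h]
      rw [hpre] at hs
      have hchain := hXq.trans (hs.trans hVq.symm)
      filter_upwards [hchain] with ω hω
      exact (ENNReal.toReal_eq_toReal_iff' (measure_ne_top _ _) (measure_ne_top _ _)).mp hω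
    rw [← ae_all_iff] at hq
    filter_upwards [hq] with ω hω
    refine ext_of_generate_finite _
      (BorelSpace.measurable_eq.trans Real.borel_eq_generateFrom_Iio_rat) Real.isPiSystem_Iio_rat ?_ ?_
    · intro s hs
      simp only [mem_iUnion, mem_singleton_iff] at hs
      obtain ⟨q, rfl⟩ := hs
      exact hω q
    · simp [measure_univ]
  -- Step 3: E[F(X·β + C) | σ(X)] equals the structural function
  have hf2meas : Measurable (fun p : (Fin d → ℝ) × ℝ => F (p.1 ⬝ᵥ β + p.2)) :=
    hFmeas.comp ((hd.comp measurable_fst).add measurable_snd)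
  have hf2int : Integrable (fun ω => F (X ω ⬝ᵥ β + C ω)) P := by
    refine (integrable_const (1:ℝ)).mono'
      ((hFmeas.comp ((hd.comp hX).add hC)).aestronglyMeasurable) ?_
    filter_upwards with ω using hFnorm _
  have h2 : P[(fun ω => F (X ω ⬝ᵥ β + C ω)) | MeasurableSpace.comap X inferInstance] =ᵐ[P]
      fun ω => ∫ c, F (X ω ⬝ᵥ β + c) ∂(condDistrib C (fun ω' => v (X ω')) P (v (X ω))) := by
    have h := condExp_prod_ae_eq_integral_condDistrib (μ := P) hX hC.aemeasurable
      hf2meas.stronglyMeasurable hf2int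
    refine h.trans ?_
    filter_upwards [hker] with ω hω
    rw [show (fun c => F (X ω ⬝ᵥ β + c)) = fun c =>
      (fun p : (Fin d → ℝ) × ℝ => F (p.1 ⬝ᵥ β + p.2)) (X ω, c) from rfl, ← hω]
  -- Step 4: the structural function is σ(X·β, V)-measurable and integrable
  have hGsm : StronglyMeasurable (fun p : ℝ × (Fin dV → ℝ) =>
      ∫ c, F (p.1 + c) ∂(condDistrib C (fun ω' => v (X ω')) P p.2)) := by
    have hf3 : StronglyMeasurable (fun q : (ℝ × (Fin dV → ℝ)) × ℝ => F (q.1.1 + q.2)) :=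
      (hFmeas.comp ((measurable_fst.comp measurable_fst).add measurable_snd)).stronglyMeasurable
    have h := hf3.integral_kernel_prod_right'
      (κ := (condDistrib C (fun ω' => v (X ω')) P).comap Prod.snd measurable_snd)
    simpa [Kernel.comap_apply] using h
  have hTm : Measurable[MeasurableSpace.comap (fun ω => (X ω ⬝ᵥ β, v (X ω))) inferInstance]
      (fun ω => (X ω ⬝ᵥ β, v (X ω))) := Measurable.of_comap_le le_rfl
  have hRHS_sm : StronglyMeasurable[MeasurableSpace.comap
        (fun ω => (X ω ⬝ᵥ β, v (X ω))) inferInstance]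
      (fun ω => ∫ c, F (X ω ⬝ᵥ β + c) ∂(condDistrib C (fun ω' => v (X ω')) P (v (X ω)))) :=
    hGsm.comp_measurable hTm
  have hRHS_int : Integrable
      (fun ω => ∫ c, F (X ω ⬝ᵥ β + c) ∂(condDistrib C (fun ω' => v (X ω')) P (v (X ω)))) P := by
    refine (integrable_const (1:ℝ)).mono' (hGsm.comp_measurable hT).aestronglyMeasurable ?_
    filter_upwards with ω
    calc ‖∫ c, F (X ω ⬝ᵥ β + c) ∂(condDistrib C (fun ω' => v (X ω')) P (v (X ω)))‖
        ≤ 1 * ((condDistrib C (fun ω' => v (X ω')) P (v (X ω))) univ).toReal :=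
          norm_integral_le_of_norm_le_const (Filter.Eventually.of_forall fun c => hFnorm _)
      _ = 1 := by simp [measure_univ]
  -- σ-algebra inclusions
  have hmTX : MeasurableSpace.comap (fun ω => (X ω ⬝ᵥ β, v (X ω))) inferInstance
      ≤ MeasurableSpace.comap X inferInstance := by
    rw [show (fun ω => (X ω ⬝ᵥ β, v (X ω)))
      = (fun x : Fin d → ℝ => (x ⬝ᵥ β, v x)) ∘ X from rfl, ← MeasurableSpace.comap_comp]
    exact MeasurableSpace.comap_mono ((hd.prodMk hv).comap_le)
  have hmXW : MeasurableSpace.comap X inferInstance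
      ≤ MeasurableSpace.comap (fun ω => (X ω, C ω)) inferInstance := by
    rw [show X = Prod.fst ∘ (fun ω => (X ω, C ω)) from rfl, ← MeasurableSpace.comap_comp]
    exact MeasurableSpace.comap_mono measurable_fst.comap_le
  -- combine everything by the tower property
  have e1 : P[Y | MeasurableSpace.comap (fun ω => (X ω ⬝ᵥ β, v (X ω))) inferInstance] =ᵐ[P]
      P[P[Y | MeasurableSpace.comap (fun ω => (X ω, C ω)) inferInstance] |
        MeasurableSpace.comap (fun ω => (X ω ⬝ᵥ β, v (X ω))) inferInstance] :=
    (condExp_condExp_of_le (hmTX.trans hmXW) hW.comap_le).symm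
  have e2 := condExp_congr_ae
    (m := MeasurableSpace.comap (fun ω => (X ω ⬝ᵥ β, v (X ω))) inferInstance) h1
  have e3 : P[(fun ω => F (X ω ⬝ᵥ β + C ω)) |
        MeasurableSpace.comap (fun ω => (X ω ⬝ᵥ β, v (X ω))) inferInstance] =ᵐ[P]
      P[P[(fun ω => F (X ω ⬝ᵥ β + C ω)) | MeasurableSpace.comap X inferInstance] |
        MeasurableSpace.comap (fun ω => (X ω ⬝ᵥ β, v (X ω))) inferInstance] :=
    (condExp_condExp_of_le hmTX hX.comap_le).symm
  have e4 := condExp_congr_ae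
    (m := MeasurableSpace.comap (fun ω => (X ω ⬝ᵥ β, v (X ω))) inferInstance) h2
  have e5 := condExp_of_stronglyMeasurable hT.comap_le hRHS_sm hRHS_int
  exact e1.trans (e2.trans (e3.trans (e4.trans (by rw [e5]))))
end

section
/- If x̄·β₀ lies in the topological interior of 𝒵₁, then P(for all w ∈ ℝ^{d_V}, π(β̂_N, w) = π(β₀, w)) → 1 as N → ∞; in particular, for any random vectors V₁,…,V_N, P(max_{i≤N} |1{(x̄·β̂_N, V_i) ∈ 𝒵} − 1{(x̄·β₀, V_i) ∈ 𝒵}| = 0) → 1. (The lemma on convergence of the trimming indicators, Lemma B.6 in the appendix.) -/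
open MeasureTheory Matrix Filter Topology

/-- Lemma B.6 (convergence of the trimming indicators): if `β̂_N → β₀` in probability and
`xbar·β₀` lies in the topological interior of `𝒵₁`, then with probability tending to one
the trimming indicator `π(β,w) = 1{(xbar·β, w) ∈ 𝒵₁ × 𝒵_V}` evaluated at `β̂_N` agrees
with the one evaluated at `β₀` for every `w`; in particular, for any random vectors
`V₁,…,V_N`, `P(max_{i≤N} |1{(xbar·β̂_N, V_i) ∈ 𝒵} − 1{(xbar·β₀, V_i) ∈ 𝒵}| = 0) → 1`. -/
theorem stmt_15 {d dV : ℕ} {Ω : Type*} [MeasurableSpace Ω] (P : Measure Ω)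
    [IsProbabilityMeasure P]
    (βhat : ℕ → Ω → Fin d → ℝ) (β₀ : Fin d → ℝ)
    (hm : ∀ N, Measurable (βhat N))
    -- convergence in probability of `β̂_N` to `β₀`
    (hconv : ∀ η : ℝ, 0 < η →
      Tendsto (fun N => P {ω | η < ‖βhat N ω - β₀‖}) atTop (𝓝 0))
    (Z₁ : Set ℝ) (hZ₁ : MeasurableSet Z₁) (ZV : Set (Fin dV → ℝ))
    (xbar : Fin d → ℝ) (hint : xbar ⬝ᵥ β₀ ∈ interior Z₁) :
    Tendsto (fun N => P {ω | ∀ w : Fin dV → ℝ,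
        (Z₁ ×ˢ ZV).indicator (fun _ => (1 : ℝ)) (xbar ⬝ᵥ βhat N ω, w) =
          (Z₁ ×ˢ ZV).indicator (fun _ => (1 : ℝ)) (xbar ⬝ᵥ β₀, w)}) atTop (𝓝 1) ∧
    ∀ V : ℕ → Ω → Fin dV → ℝ,
      Tendsto (fun N => P {ω | ∀ i < N,
          (Z₁ ×ˢ ZV).indicator (fun _ => (1 : ℝ)) (xbar ⬝ᵥ βhat N ω, V i ω) =
            (Z₁ ×ˢ ZV).indicator (fun _ => (1 : ℝ)) (xbar ⬝ᵥ β₀, V i ω)}) atTop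
        (𝓝 1) := by
  -- Find ε-ball around xbar⬝β₀ inside Z₁
  obtain ⟨ε, hε, hball⟩ := Metric.isOpen_iff.mp isOpen_interior _ hint
  have hballZ : Metric.ball (xbar ⬝ᵥ β₀) ε ⊆ Z₁ := hball.trans interior_subset
  set S : ℝ := ∑ i, |xbar i| with hS
  have hSnn : 0 ≤ S := Finset.sum_nonneg fun i _ => abs_nonneg _
  set η : ℝ := ε / (S + 1) with hη
  have hηpos : 0 < η := div_pos hε (by linarith)
  -- key pointwise fact
  have key : ∀ N ω, ‖βhat N ω - β₀‖ ≤ η → ∀ w : Fin dV → ℝ,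
      (Z₁ ×ˢ ZV).indicator (fun _ => (1 : ℝ)) (xbar ⬝ᵥ βhat N ω, w) =
        (Z₁ ×ˢ ZV).indicator (fun _ => (1 : ℝ)) (xbar ⬝ᵥ β₀, w) := by
    intro N ω hω w
    have hdot : |xbar ⬝ᵥ βhat N ω - xbar ⬝ᵥ β₀| < ε := by
      have h1 : xbar ⬝ᵥ βhat N ω - xbar ⬝ᵥ β₀ = xbar ⬝ᵥ (βhat N ω - β₀) := by
        simp [dotProduct, Finset.sum_sub_distrib, mul_sub]
      rw [h1]
      have h2 : |xbar ⬝ᵥ (βhat N ω - β₀)| ≤ S * η := by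
        calc |xbar ⬝ᵥ (βhat N ω - β₀)| ≤ ∑ i, |xbar i * (βhat N ω - β₀) i| :=
              Finset.abs_sum_le_sum_abs _ _
          _ ≤ ∑ i, |xbar i| * η := by
              apply Finset.sum_le_sum
              intro i _
              rw [abs_mul]
              exact mul_le_mul_of_nonneg_left
                (le_trans (norm_le_pi_norm (βhat N ω - β₀) i) hω) (abs_nonneg _)
          _ = S * η := by rw [← Finset.sum_mul]
      have h3 : S * η < (S + 1) * η := by nlinarith
      have h4 : (S + 1) * η = ε := by
        rw [hη]; field_simp [show S + 1 ≠ 0 by linarith]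
      linarith
    have hin : xbar ⬝ᵥ βhat N ω ∈ Z₁ := by
      apply hballZ
      simpa [Metric.mem_ball, Real.dist_eq] using hdot
    have hin0 : xbar ⬝ᵥ β₀ ∈ Z₁ := hballZ (Metric.mem_ball_self hε)
    by_cases hw : w ∈ ZV
    · simp [Set.indicator_apply, Set.mem_prod, hin, hin0, hw]
    · simp [Set.indicator_apply, Set.mem_prod, hw]
  -- squeeze argument, abstract over the target sets
  have main : ∀ A : ℕ → Set Ω,
      (∀ N, {ω | ‖βhat N ω - β₀‖ ≤ η} ⊆ A N) →
      Tendsto (fun N => P (A N)) atTop (𝓝 1) := by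
    intro A hA
    have hbadm : ∀ N, MeasurableSet {ω | η < ‖βhat N ω - β₀‖} := by
      intro N
      exact measurableSet_lt measurable_const ((hm N).sub measurable_const).norm
    have hlow : ∀ N, 1 - P {ω | η < ‖βhat N ω - β₀‖} ≤ P (A N) := by
      intro N
      have : {ω | η < ‖βhat N ω - β₀‖}ᶜ = {ω | ‖βhat N ω - β₀‖ ≤ η} := by
        ext ω; simp [not_lt]
      calc 1 - P {ω | η < ‖βhat N ω - β₀‖} = P {ω | η < ‖βhat N ω - β₀‖}ᶜ :=
            (prob_compl_eq_one_sub (hbadm N)).symm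
        _ = P {ω | ‖βhat N ω - β₀‖ ≤ η} := by rw [this]
        _ ≤ P (A N) := measure_mono (hA N)
    have hup : ∀ N, P (A N) ≤ 1 := fun N => prob_le_one
    have hlt : Tendsto (fun N => 1 - P {ω | η < ‖βhat N ω - β₀‖}) atTop (𝓝 1) := by
      have := ENNReal.Tendsto.sub (tendsto_const_nhds (x := (1:ENNReal)))
        (hconv η hηpos) (by simp)
      simpa using this
    exact tendsto_of_tendsto_of_tendsto_of_le_of_le hlt tendsto_const_nhds hlow hup
  constructor
  · exact main _ fun N ω hω => fun w => key N ω hω w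
  · intro V
    exact main _ fun N ω hω => fun i _ => key N ω hω (V i ω)
end

section
/- Assume U₁ is independent of the triple (X, Y₀, C) and dynamic index sufficiency holds: for every bounded measurable g : ℝ → ℝ, E[g(C) | σ(X, Y₀)] = E[g(C) | σ(V, Y₀)] P-almost surely. Let κ = condDistrib C (V,Y₀) P. Then P-almost surely, E[Y₁ | σ(X, Y₀)](ω) = ∫_ℝ F_{U₁}(X₁(ω)·β + γ·Y₀(ω) + c) dκ((V(ω), Y₀(ω)))(c); consequently, for any w̄ = (x̄, ȳ) ∈ ℝ^d × {0,1}, the dynamic average structural function ∫ F_{U₁}(x̄·β + γȳ + c) d(law of C)(c) equals ∫∫ F_{U₁}(x̄·β + γȳ + c) dκ(v,y₀)(c) d(law of (V,Y₀))(v,y₀). (The structural representation underlying the identification of the ASF in the dynamic panel model of Section 4.3.) -/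
open MeasureTheory ProbabilityTheory Matrix

private lemma integrable_of_bdd {α : Type*} [MeasurableSpace α] (μ : Measure α)
    [IsFiniteMeasure μ] {f : α → ℝ} (hf : Measurable f) (hb : ∀ x, |f x| ≤ 1) :
    Integrable f μ :=
  ⟨hf.aestronglyMeasurable,
    HasFiniteIntegral.of_bounded (C := 1) (Filter.Eventually.of_forall fun x => by
      simpa [Real.norm_eq_abs] using hb x)⟩

/-- If `U ⟂ Z`, the conditional expectation of `1{U ≤ H(Z)}` given `σ(Z)` is the CDF of `U`
evaluated at `H(Z)`. -/
private lemma aux_indep {Ω γ : Type*} [MeasurableSpace Ω] [MeasurableSpace γ]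
    (P : Measure Ω) [IsProbabilityMeasure P] {Z : Ω → γ} {U : Ω → ℝ}
    (hZ : Measurable Z) (hU : Measurable U) (hind : IndepFun U Z P)
    {H : γ → ℝ} (hH : Measurable H) :
    P[(fun ω => if U ω ≤ H (Z ω) then (1:ℝ) else 0) |
        MeasurableSpace.comap Z inferInstance] =ᵐ[P]
      fun ω => (P.map U (Set.Iic (H (Z ω)))).toReal := by
  haveI hpr : IsProbabilityMeasure (P.map U) := Measure.isProbabilityMeasure_map hU.aemeasurable
  set f : γ × ℝ → ℝ := fun p => if p.2 ≤ H p.1 then 1 else 0 with hf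
  have hsle : MeasurableSet {p : γ × ℝ | p.2 ≤ H p.1} :=
    measurableSet_le measurable_snd (hH.comp measurable_fst)
  have hfm : Measurable f := Measurable.ite hsle measurable_const measurable_const
  have hfb : ∀ p, |f p| ≤ 1 := by
    intro p; by_cases h : p.2 ≤ H p.1 <;> simp [hf, h]
  have hint : Integrable (fun ω => f (Z ω, U ω)) P :=
    integrable_of_bdd P (hfm.comp (hZ.prodMk hU)) fun ω => hfb _
  have h1 := condExp_prod_ae_eq_integral_condDistrib hZ hU.aemeasurable
    hfm.stronglyMeasurable hint
  have hmap : P.map (fun ω => (Z ω, U ω)) = (P.map Z).prod (P.map U) :=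
    (indepFun_iff_map_prod_eq_prod_map_map hZ.aemeasurable hU.aemeasurable).mp hind.symm
  have hker : ∀ᵐ x ∂P.map Z, Kernel.const γ (P.map U) x = condDistrib U Z P x := by
    refine (condDistrib_ae_eq_of_measure_eq_compProd_of_measurable hZ hU
      (κ := Kernel.const γ (P.map U)) ?_).symm
    rw [Measure.compProd_const, hmap]
  have hker' : ∀ᵐ ω ∂P, Kernel.const γ (P.map U) (Z ω) = condDistrib U Z P (Z ω) :=
    ae_of_ae_map hZ.aemeasurable hker
  refine h1.trans ?_
  filter_upwards [hker'] with ω hω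
  rw [← hω, Kernel.const_apply]
  have hfun : (fun u => f (Z ω, u)) =
      Set.indicator (Set.Iic (H (Z ω))) (fun _ => (1:ℝ)) := by
    funext u; simp [hf, Set.indicator_apply, Set.mem_Iic]
  rw [hfun, integral_indicator_const _ measurableSet_Iic, smul_eq_mul, mul_one]; rfl

/-- Index sufficiency implies a.e. equality of the two conditional kernels. -/
private lemma aux_ker {Ω γ₁ γ₂ : Type*} [MeasurableSpace Ω] [MeasurableSpace γ₁]
    [MeasurableSpace γ₂] (P : Measure Ω) [IsProbabilityMeasure P]
    {W : Ω → γ₁} {V : Ω → γ₂} {C : Ω → ℝ}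
    (hW : Measurable W) (hV : Measurable V) (hC : Measurable C)
    (h : ∀ g : ℝ → ℝ, Measurable g → (∃ M, ∀ x, |g x| ≤ M) →
      P[(fun ω => g (C ω)) | MeasurableSpace.comap W inferInstance] =ᵐ[P]
        P[(fun ω => g (C ω)) | MeasurableSpace.comap V inferInstance]) :
    ∀ᵐ ω ∂P, condDistrib C W P (W ω) = condDistrib C V P (V ω) := by
  have key : ∀ q : ℚ, ∀ᵐ ω ∂P,
      condDistrib C W P (W ω) (Set.Iic (q:ℝ)) = condDistrib C V P (V ω) (Set.Iic (q:ℝ)) := by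
    intro q
    set g : ℝ → ℝ := Set.indicator (Set.Iic (q:ℝ)) (fun _ => 1) with hg
    have hgm : Measurable g := measurable_const.indicator measurableSet_Iic
    have hgb : ∀ x, |g x| ≤ 1 := by
      intro x; by_cases hx : x ∈ Set.Iic (q:ℝ) <;> simp [hg, Set.indicator_apply, hx]
    have hgi : Integrable (fun ω => g (C ω)) P :=
      integrable_of_bdd P (hgm.comp hC) fun ω => hgb _
    have h1 := condExp_ae_eq_integral_condDistrib hW hC.aemeasurable
      hgm.stronglyMeasurable hgi
    have h2 := condExp_ae_eq_integral_condDistrib hV hC.aemeasurable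
      hgm.stronglyMeasurable hgi
    have h3 := h g hgm ⟨1, hgb⟩
    filter_upwards [h1.symm.trans (h3.trans h2)] with ω hω
    have e1 : ∫ y, g y ∂condDistrib C W P (W ω)
        = (condDistrib C W P (W ω) (Set.Iic (q:ℝ))).toReal := by
      rw [hg, integral_indicator_const _ measurableSet_Iic, smul_eq_mul, mul_one]; rfl
    have e2 : ∫ y, g y ∂condDistrib C V P (V ω)
        = (condDistrib C V P (V ω) (Set.Iic (q:ℝ))).toReal := by
      rw [hg, integral_indicator_const _ measurableSet_Iic, smul_eq_mul, mul_one]; rfl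
    rw [e1, e2] at hω
    exact (ENNReal.toReal_eq_toReal_iff' (measure_ne_top _ _) (measure_ne_top _ _)).mp hω
  rw [← ae_all_iff] at key
  filter_upwards [key] with ω hω
  refine ext_of_generate_finite _
    (BorelSpace.measurable_eq.trans Real.borel_eq_generateFrom_Iic_rat)
    Real.isPiSystem_Iic_rat ?_ ?_
  · rintro s hs
    simp only [Set.mem_iUnion, Set.mem_singleton_iff] at hs
    obtain ⟨q, rfl⟩ := hs
    exact hω q
  · simp

/-- Law of total expectation through `condDistrib`. -/
private lemma aux_total {Ω γ : Type*} [MeasurableSpace Ω] [MeasurableSpace γ]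
    (P : Measure Ω) [IsProbabilityMeasure P] {V : Ω → γ} {C : Ω → ℝ}
    (hV : Measurable V) (hC : Measurable C) {g : ℝ → ℝ}
    (hg : Measurable g) (hb : ∀ x, |g x| ≤ 1) :
    ∫ c, g c ∂(P.map C) = ∫ q, (∫ c, g c ∂condDistrib C V P q) ∂(P.map V) := by
  haveI hρ : IsProbabilityMeasure (P.map (fun ω => (V ω, C ω))) :=
    Measure.isProbabilityMeasure_map (hV.aemeasurable.prodMk hC.aemeasurable)
  have hfi : Integrable (fun p : γ × ℝ => g p.2) (P.map fun ω => (V ω, C ω)) :=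
    integrable_of_bdd _ (hg.comp measurable_snd) fun p => hb _
  have h1 : ∫ q, (∫ c, g c ∂condDistrib C V P q) ∂(P.map V)
      = ∫ p : γ × ℝ, g p.2 ∂(P.map fun ω => (V ω, C ω)) := by
    rw [condDistrib, ← Measure.fst_map_prodMk₀ hC.aemeasurable]
    exact Measure.integral_condKernel hfi
  rw [h1, integral_map (hV.aemeasurable.prodMk hC.aemeasurable) hfi.1,
    integral_map hC.aemeasurable hg.aestronglyMeasurable]

/-- Dynamic panel (Section 4.3): assume `U₁ ⟂ (X, Y₀, C)` and dynamic index sufficiency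
`E[g(C) | σ(X, Y₀)] = E[g(C) | σ(V, Y₀)]` a.s. for every bounded measurable `g`.  With
`κ = condDistrib C (V,Y₀) P`, the regression of `Y₁ = 1{X₁·β + γY₀ + C − U₁ ≥ 0}` on
`(X, Y₀)` equals `∫ F_{U₁}(X₁·β + γY₀ + c) dκ(V,Y₀)(c)` a.s.; consequently, for any
`w̄ = (xbar, ybar)` with `ybar ∈ {0,1}`, the dynamic ASF
`∫ F_{U₁}(xbar·β + γ·ybar + c) d(law C)(c)` equals the partial mean
`∫∫ F_{U₁}(xbar·β + γ·ybar + c) dκ(v,y₀)(c) d(law (V,Y₀))(v,y₀)`. -/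
theorem stmt_19 {d dV T : ℕ} {Ω : Type*} [MeasurableSpace Ω] (P : Measure Ω)
    [IsProbabilityMeasure P] (hT : 0 < T)
    (β : Fin d → ℝ) (γ : ℝ)
    (X : Ω → Fin T → Fin d → ℝ) (Y₀ : Ω → ℝ) (C : Ω → ℝ) (U₁ : Ω → ℝ)
    (hX : Measurable X) (hY₀ : Measurable Y₀) (hY₀01 : ∀ ω, Y₀ ω = 0 ∨ Y₀ ω = 1)
    (hC : Measurable C) (hU : Measurable U₁)
    (v : (Fin T → Fin d → ℝ) → Fin dV → ℝ) (hv : Measurable v)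
    -- `U₁` independent of the triple `(X, Y₀, C)`
    (hind : IndepFun U₁ (fun ω => (X ω, Y₀ ω, C ω)) P)
    -- dynamic index sufficiency
    (hsuff : ∀ g : ℝ → ℝ, Measurable g → (∃ M, ∀ x, |g x| ≤ M) →
      P[(fun ω => g (C ω)) |
          MeasurableSpace.comap (fun ω => (X ω, Y₀ ω)) inferInstance] =ᵐ[P]
        P[(fun ω => g (C ω)) |
          MeasurableSpace.comap (fun ω => (v (X ω), Y₀ ω)) inferInstance])
    (F : ℝ → ℝ) (hF : ∀ u, F u = (P {ω | U₁ ω ≤ u}).toReal)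
    (Y₁ : Ω → ℝ)
    (hY₁ : Y₁ = fun ω =>
      if 0 ≤ X ω ⟨0, hT⟩ ⬝ᵥ β + γ * Y₀ ω + C ω - U₁ ω then 1 else 0) :
    (P[Y₁ | MeasurableSpace.comap (fun ω => (X ω, Y₀ ω)) inferInstance] =ᵐ[P]
      fun ω => ∫ c, F (X ω ⟨0, hT⟩ ⬝ᵥ β + γ * Y₀ ω + c)
        ∂(condDistrib C (fun ω' => (v (X ω'), Y₀ ω')) P (v (X ω), Y₀ ω))) ∧
    (∀ (xbar : Fin d → ℝ) (ybar : ℝ), ybar = 0 ∨ ybar = 1 →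
      ∫ c, F (xbar ⬝ᵥ β + γ * ybar + c) ∂(P.map C) =
        ∫ q, (∫ c, F (xbar ⬝ᵥ β + γ * ybar + c)
            ∂(condDistrib C (fun ω' => (v (X ω'), Y₀ ω')) P q))
          ∂(P.map (fun ω => (v (X ω), Y₀ ω)))) := by
  classical
  haveI hpr : IsProbabilityMeasure (P.map U₁) := Measure.isProbabilityMeasure_map hU.aemeasurable
  -- basic measurability
  have hW : Measurable (fun ω => (X ω, Y₀ ω)) := hX.prodMk hY₀
  have hVW : Measurable (fun ω => (v (X ω), Y₀ ω)) := (hv.comp hX).prodMk hY₀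
  have hZ : Measurable (fun ω => (X ω, Y₀ ω, C ω)) := hX.prodMk (hY₀.prodMk hC)
  have hdot : Measurable (fun x : Fin d → ℝ => x ⬝ᵥ β) := by
    have : (fun x : Fin d → ℝ => x ⬝ᵥ β) = fun x => ∑ i, x i * β i := rfl
    rw [this]
    exact Finset.measurable_sum _ fun i _ => by fun_prop
  -- properties of F
  have hFdef : ∀ s, F s = (P.map U₁ (Set.Iic s)).toReal := by
    intro s
    rw [hF, Measure.map_apply hU measurableSet_Iic]
    rfl
  have hFmono : Monotone F := by
    intro a b hab
    rw [hFdef, hFdef]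
    exact ENNReal.toReal_mono (measure_ne_top _ _)
      (measure_mono (Set.Iic_subset_Iic.2 hab))
  have hFmeas : Measurable F := hFmono.measurable
  have hFb : ∀ s, |F s| ≤ 1 := by
    intro s
    rw [hFdef, abs_of_nonneg ENNReal.toReal_nonneg]
    simpa using ENNReal.toReal_mono ENNReal.one_ne_top prob_le_one
  -- Step 1 : C.E. given σ(X,Y₀,C)
  have hH : Measurable (fun p : (Fin T → Fin d → ℝ) × ℝ × ℝ =>
      p.1 ⟨0, hT⟩ ⬝ᵥ β + γ * p.2.1 + p.2.2) := by
    refine Measurable.add ?_ (measurable_snd.comp measurable_snd)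
    exact ((hdot.comp ((measurable_pi_apply _).comp measurable_fst)).add
      (measurable_const.mul (measurable_fst.comp measurable_snd)))
  have hstep1 := aux_indep P hZ hU hind hH
  have hY₁' : Y₁ = fun ω =>
      if U₁ ω ≤ X ω ⟨0, hT⟩ ⬝ᵥ β + γ * Y₀ ω + C ω then (1:ℝ) else 0 := by
    rw [hY₁]; funext ω; simp [sub_nonneg]
  have hcondZ : P[Y₁ | MeasurableSpace.comap (fun ω => (X ω, Y₀ ω, C ω)) inferInstance]
      =ᵐ[P] fun ω => F (X ω ⟨0, hT⟩ ⬝ᵥ β + γ * Y₀ ω + C ω) := by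
    rw [hY₁']
    refine hstep1.trans (Filter.Eventually.of_forall fun ω => ?_)
    exact (hFdef _).symm
  -- Step 2 : tower property
  have hle : MeasurableSpace.comap (fun ω => (X ω, Y₀ ω)) inferInstance ≤
      MeasurableSpace.comap (fun ω => (X ω, Y₀ ω, C ω)) inferInstance := by
    rintro s ⟨t, ht, rfl⟩
    exact ⟨(fun p : (Fin T → Fin d → ℝ) × ℝ × ℝ => (p.1, p.2.1)) ⁻¹' t,
      (measurable_fst.prodMk (measurable_fst.comp measurable_snd)) ht, rfl⟩
  have htower : P[Y₁ | MeasurableSpace.comap (fun ω => (X ω, Y₀ ω)) inferInstance]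
      =ᵐ[P] P[(fun ω => F (X ω ⟨0, hT⟩ ⬝ᵥ β + γ * Y₀ ω + C ω)) |
        MeasurableSpace.comap (fun ω => (X ω, Y₀ ω)) inferInstance] :=
    (condExp_condExp_of_le hle hZ.comap_le).symm.trans (condExp_congr_ae hcondZ)
  -- Step 3 : C.E. given σ(X,Y₀) as integral against condDistrib C (X,Y₀)
  have hf2m : Measurable (fun p : ((Fin T → Fin d → ℝ) × ℝ) × ℝ =>
      F (p.1.1 ⟨0, hT⟩ ⬝ᵥ β + γ * p.1.2 + p.2)) := by
    refine hFmeas.comp ?_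
    refine Measurable.add ?_ measurable_snd
    exact ((hdot.comp ((measurable_pi_apply _).comp (measurable_fst.comp measurable_fst))).add
      (measurable_const.mul (measurable_snd.comp measurable_fst)))
  have hf2i : Integrable (fun ω => F (X ω ⟨0, hT⟩ ⬝ᵥ β + γ * Y₀ ω + C ω)) P :=
    integrable_of_bdd P (hFmeas.comp ((((hdot.comp
      ((measurable_pi_apply _).comp hX))).add (measurable_const.mul hY₀)).add hC))
      fun ω => hFb _
  have hstep3 := condExp_prod_ae_eq_integral_condDistrib
    (f := fun p : ((Fin T → Fin d → ℝ) × ℝ) × ℝ => F (p.1.1 ⟨0, hT⟩ ⬝ᵥ β + γ * p.1.2 + p.2))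
    hW hC.aemeasurable hf2m.stronglyMeasurable hf2i
  -- Step 4 : kernels agree a.e.
  have hker := aux_ker P hW hVW hC hsuff
  constructor
  · refine (htower.trans hstep3).trans ?_
    filter_upwards [hker] with ω hω
    exact congrArg (fun m => ∫ c, F (X ω ⟨0, hT⟩ ⬝ᵥ β + γ * Y₀ ω + c) ∂m) hω
  · intro xbar ybar _
    have hgm : Measurable (fun c => F (xbar ⬝ᵥ β + γ * ybar + c)) :=
      hFmeas.comp (measurable_const.add measurable_id)
    exact aux_total P hVW hC hgm fun c => hFb _
end
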